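/- arXiv:2404.13283 — 2 statements merged into one kernel-verified Lean document; each statement's English description precedes it below -/
import Mathlib

section
/- Let l₁ > 0, l₂ > 0 and x₀ > 0 be real numbers and let z be a complex number with Re(z) ≥ x₀. Then |cosh(l₁z)·cosh(l₂z)/(sinh(l₁z)·sinh(l₂z)) − 1| ≤ coth(l₁x₀)·coth(l₂x₀) − 1. -/
open Complex in
lemma aux_abs_cosh_le (w : ℂ) : ‖Complex.cosh w‖ ≤ Real.cosh w.re := by
  rw [Complex.cosh, Real.cosh_eq]
  calc ‖(Complex.exp w + Complex.exp (-w)) / 2‖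
      ≤ (‖Complex.exp w‖ + ‖Complex.exp (-w)‖) / 2 := by
        rw [norm_div]
        simp only [Complex.norm_two]
        gcongr
        exact norm_add_le _ _
    _ = (Real.exp w.re + Real.exp (-w.re)) / 2 := by
        rw [Complex.norm_exp, Complex.norm_exp, Complex.neg_re]

lemma aux_sinh_le_abs (w : ℂ) : Real.sinh w.re ≤ ‖Complex.sinh w‖ := by
  rw [Complex.sinh, Real.sinh_eq]
  calc (Real.exp w.re - Real.exp (-w.re)) / 2
      = (‖Complex.exp w‖ - ‖Complex.exp (-w)‖) / 2 := by
        rw [Complex.norm_exp, Complex.norm_exp, Complex.neg_re]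
    _ ≤ ‖Complex.exp w - Complex.exp (-w)‖ / 2 := by
        gcongr
        have := norm_add_le (Complex.exp w - Complex.exp (-w)) (Complex.exp (-w))
        rw [sub_add_cancel] at this
        linarith
    _ = ‖(Complex.exp w - Complex.exp (-w)) / 2‖ := by
        rw [norm_div, Complex.norm_two]

lemma aux_coth_anti {a x : ℝ} (ha : 0 < a) (hx : a ≤ x) :
    Real.cosh x / Real.sinh x ≤ Real.cosh a / Real.sinh a := by
  have hsx : 0 < Real.sinh x := Real.sinh_pos_iff.2 (ha.trans_le hx)
  have hsa : 0 < Real.sinh a := Real.sinh_pos_iff.2 ha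
  rw [div_le_div_iff₀ hsx hsa]
  have : 0 ≤ Real.sinh (x - a) := Real.sinh_nonneg_iff.2 (by linarith)
  rw [Real.sinh_sub] at this
  linarith

/-- For `l₁, l₂, x₀ > 0` and `Re(z) ≥ x₀`,
`|cosh(l₁z)cosh(l₂z)/(sinh(l₁z)sinh(l₂z)) − 1| ≤ coth(l₁x₀)coth(l₂x₀) − 1`. -/
theorem stmt14 (l₁ l₂ x₀ : ℝ) (h1 : 0 < l₁) (h2 : 0 < l₂) (h0 : 0 < x₀)
    (z : ℂ) (hz : x₀ ≤ z.re) :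
    ‖Complex.cosh ((l₁ : ℂ) * z) * Complex.cosh ((l₂ : ℂ) * z) /
        (Complex.sinh ((l₁ : ℂ) * z) * Complex.sinh ((l₂ : ℂ) * z)) - 1‖ ≤
      (Real.cosh (l₁ * x₀) / Real.sinh (l₁ * x₀)) *
        (Real.cosh (l₂ * x₀) / Real.sinh (l₂ * x₀)) - 1 := by
  set A : ℂ := (l₁ : ℂ) * z
  set B : ℂ := (l₂ : ℂ) * z
  have hAre : A.re = l₁ * z.re := by simp [A]
  have hBre : B.re = l₂ * z.re := by simp [B]
  have hx0 : 0 < z.re := h0.trans_le hz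
  have ha1 : l₁ * x₀ ≤ A.re := by rw [hAre]; nlinarith
  have ha2 : l₂ * x₀ ≤ B.re := by rw [hBre]; nlinarith
  have hsA : 0 < Real.sinh A.re := Real.sinh_pos_iff.2 (by nlinarith [mul_pos h1 h0])
  have hsB : 0 < Real.sinh B.re := Real.sinh_pos_iff.2 (by nlinarith [mul_pos h2 h0])
  have hAbsA : Real.sinh A.re ≤ ‖Complex.sinh A‖ := aux_sinh_le_abs A
  have hAbsB : Real.sinh B.re ≤ ‖Complex.sinh B‖ := aux_sinh_le_abs B
  have hA0 : Complex.sinh A ≠ 0 := by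
    intro h; rw [h] at hAbsA; simp at hAbsA; nlinarith [mul_pos h1 h0]
  have hB0 : Complex.sinh B ≠ 0 := by
    intro h; rw [h] at hAbsB; simp at hAbsB; nlinarith [mul_pos h2 h0]
  have key : Complex.cosh A * Complex.cosh B / (Complex.sinh A * Complex.sinh B) - 1
      = Complex.cosh (A - B) / (Complex.sinh A * Complex.sinh B) := by
    rw [Complex.cosh_sub]
    field_simp
  rw [key]
  have step1 : ‖Complex.cosh (A - B) / (Complex.sinh A * Complex.sinh B)‖
      ≤ Real.cosh (A.re - B.re) / (Real.sinh A.re * Real.sinh B.re) := by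
    rw [norm_div, norm_mul]
    apply div_le_div₀ ((Real.cosh_pos _).le) _ (mul_pos hsA hsB) (mul_le_mul hAbsA hAbsB hsB.le (norm_nonneg _))
    calc ‖Complex.cosh (A - B)‖ ≤ Real.cosh (A - B).re := aux_abs_cosh_le _
      _ = Real.cosh (A.re - B.re) := by rw [Complex.sub_re]
  refine step1.trans ?_
  have step2 : Real.cosh (A.re - B.re) / (Real.sinh A.re * Real.sinh B.re)
      = (Real.cosh A.re / Real.sinh A.re) * (Real.cosh B.re / Real.sinh B.re) - 1 := by
    rw [Real.cosh_sub]
    field_simp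
  rw [step2]
  have c1 : Real.cosh A.re / Real.sinh A.re ≤ Real.cosh (l₁ * x₀) / Real.sinh (l₁ * x₀) :=
    aux_coth_anti (mul_pos h1 h0) ha1
  have c2 : Real.cosh B.re / Real.sinh B.re ≤ Real.cosh (l₂ * x₀) / Real.sinh (l₂ * x₀) :=
    aux_coth_anti (mul_pos h2 h0) ha2
  have p1 : 0 ≤ Real.cosh B.re / Real.sinh B.re := div_nonneg (Real.cosh_pos _).le hsB.le
  have p2 : 0 ≤ Real.cosh (l₁ * x₀) / Real.sinh (l₁ * x₀) :=
    div_nonneg (Real.cosh_pos _).le (Real.sinh_pos_iff.2 (mul_pos h1 h0)).le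
  have := mul_le_mul c1 c2 p1 p2
  linarith
end

section
/- Let l₀, l₁, l₂ > 0 and x₀ > 0 be real numbers, let ρ₁, ρ₂ ≥ 0 be real numbers, and let z be a complex number with Re(z) ≥ x₀. Then |(1/sinh(l₀z))·(ρ₁·cosh(l₁z)/sinh(l₁z) − ρ₂·cosh(l₂z)/sinh(l₂z))| ≤ (1/sinh(l₀x₀))·(ρ₁·coth(l₁x₀) + ρ₂·coth(l₂x₀)). -/
lemma sinh_decomp (z : ℂ) : Complex.sinh z =
    (Real.sinh z.re * Real.cos z.im : ℝ) + (Real.cosh z.re * Real.sin z.im : ℝ) * Complex.I := by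
  conv_lhs => rw [← Complex.re_add_im z]
  rw [Complex.sinh_add, Complex.sinh_mul_I, Complex.cosh_mul_I, ← Complex.ofReal_sinh,
    ← Complex.ofReal_cosh, ← Complex.ofReal_sin, ← Complex.ofReal_cos]
  push_cast
  ring

lemma cosh_decomp (z : ℂ) : Complex.cosh z =
    (Real.cosh z.re * Real.cos z.im : ℝ) + (Real.sinh z.re * Real.sin z.im : ℝ) * Complex.I := by
  conv_lhs => rw [← Complex.re_add_im z]
  rw [Complex.cosh_add, Complex.sinh_mul_I, Complex.cosh_mul_I, ← Complex.ofReal_sinh,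
    ← Complex.ofReal_cosh, ← Complex.ofReal_sin, ← Complex.ofReal_cos]
  push_cast
  ring

lemma abs_sinh_sq (z : ℂ) :
    ‖Complex.sinh z‖^2 = Real.sinh z.re ^2 + Real.sin z.im ^2 := by
  rw [sinh_decomp z, Complex.sq_norm, Complex.normSq_apply]
  simp [Complex.sinh_ofReal_re, Complex.cosh_ofReal_re, Complex.sin_ofReal_re, Complex.cos_ofReal_re]
  have h1 := Real.sin_sq_add_cos_sq z.im
  have h2 := Real.cosh_sq z.re
  nlinarith [h1, h2]

lemma abs_cosh_sq (z : ℂ) :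
    ‖Complex.cosh z‖^2 = Real.sinh z.re ^2 + Real.cos z.im ^2 := by
  rw [cosh_decomp z, Complex.sq_norm, Complex.normSq_apply]
  simp [Complex.sinh_ofReal_re, Complex.cosh_ofReal_re, Complex.sin_ofReal_re, Complex.cos_ofReal_re]
  have h1 := Real.sin_sq_add_cos_sq z.im
  have h2 := Real.cosh_sq z.re
  nlinarith [h1, h2]

lemma sinh_le_abs_sinh (z : ℂ) (h : 0 ≤ z.re) :
    Real.sinh z.re ≤ ‖Complex.sinh z‖ := by
  have h1 := abs_sinh_sq z
  have h2 : 0 ≤ Real.sinh z.re := Real.sinh_nonneg_iff.mpr h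
  have h3 : 0 ≤ ‖Complex.sinh z‖ := norm_nonneg _
  nlinarith [sq_nonneg (Real.sin z.im)]

lemma abs_coth_le (z : ℂ) (h : 0 < z.re) :
    ‖Complex.cosh z / Complex.sinh z‖ ≤ Real.cosh z.re / Real.sinh z.re := by
  have hs : 0 < Real.sinh z.re := Real.sinh_pos_iff.mpr h
  have habs : 0 < ‖Complex.sinh z‖ :=
    lt_of_lt_of_le hs (sinh_le_abs_sinh z h.le)
  rw [norm_div, div_le_div_iff₀ habs hs]
  have key : (‖Complex.cosh z‖ * Real.sinh z.re)^2 ≤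
      (Real.cosh z.re * ‖Complex.sinh z‖)^2 := by
    have h1 := abs_sinh_sq z
    have h2 := abs_cosh_sq z
    have h3 := Real.sin_sq_add_cos_sq z.im
    have h4 := Real.cosh_sq z.re
    nlinarith [sq_nonneg (Real.sin z.im), sq_nonneg (Real.sinh z.re), sq_nonneg (Real.cosh z.re)]
  have ha : 0 ≤ ‖Complex.cosh z‖ * Real.sinh z.re :=
    mul_nonneg (norm_nonneg _) hs.le
  have hb : 0 ≤ Real.cosh z.re * ‖Complex.sinh z‖ :=
    mul_nonneg (Real.cosh_pos _).le habs.le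
  nlinarith [key, ha, hb]

lemma coth_anti {a b : ℝ} (ha : 0 < a) (hab : a ≤ b) :
    Real.cosh b / Real.sinh b ≤ Real.cosh a / Real.sinh a := by
  have hsa : 0 < Real.sinh a := Real.sinh_pos_iff.mpr ha
  have hsb : 0 < Real.sinh b := Real.sinh_pos_iff.mpr (lt_of_lt_of_le ha hab)
  rw [div_le_div_iff₀ hsb hsa]
  have h : 0 ≤ Real.sinh (b - a) := Real.sinh_nonneg_iff.mpr (by linarith)
  rw [Real.sinh_sub] at h
  nlinarith

/-- For `l₀, l₁, l₂, x₀ > 0`, `ρ₁, ρ₂ ≥ 0` and `Re(z) ≥ x₀`,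
`|(1/sinh(l₀z))(ρ₁ cosh(l₁z)/sinh(l₁z) − ρ₂ cosh(l₂z)/sinh(l₂z))|
  ≤ (1/sinh(l₀x₀))(ρ₁ coth(l₁x₀) + ρ₂ coth(l₂x₀))`. -/
theorem stmt17 (l₀ l₁ l₂ x₀ : ℝ) (h0' : 0 < l₀) (h1 : 0 < l₁) (h2 : 0 < l₂) (h0 : 0 < x₀)
    (ρ₁ ρ₂ : ℝ) (hρ₁ : 0 ≤ ρ₁) (hρ₂ : 0 ≤ ρ₂)
    (z : ℂ) (hz : x₀ ≤ z.re) :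
    ‖(1 / Complex.sinh ((l₀ : ℂ) * z)) *
        ((ρ₁ : ℂ) * Complex.cosh ((l₁ : ℂ) * z) / Complex.sinh ((l₁ : ℂ) * z) -
         (ρ₂ : ℂ) * Complex.cosh ((l₂ : ℂ) * z) / Complex.sinh ((l₂ : ℂ) * z))‖ ≤
      (1 / Real.sinh (l₀ * x₀)) *
        (ρ₁ * (Real.cosh (l₁ * x₀) / Real.sinh (l₁ * x₀)) +
         ρ₂ * (Real.cosh (l₂ * x₀) / Real.sinh (l₂ * x₀))) := by
  have hzre : 0 < z.re := lt_of_lt_of_le h0 hz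
  have hre : ∀ l : ℝ, ((l : ℂ) * z).re = l * z.re := by
    intro l; simp [Complex.mul_re]
  have coth_bd : ∀ l : ℝ, 0 < l →
      ‖Complex.cosh ((l:ℂ)*z) / Complex.sinh ((l:ℂ)*z)‖ ≤
        Real.cosh (l * x₀) / Real.sinh (l * x₀) := by
    intro l hl
    have hpos : 0 < ((l:ℂ)*z).re := by rw [hre]; exact mul_pos hl hzre
    calc ‖Complex.cosh ((l:ℂ)*z) / Complex.sinh ((l:ℂ)*z)‖
        ≤ Real.cosh ((l:ℂ)*z).re / Real.sinh ((l:ℂ)*z).re := abs_coth_le _ hpos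
      _ ≤ Real.cosh (l * x₀) / Real.sinh (l * x₀) := by
          rw [hre]
          exact coth_anti (mul_pos hl h0) (by nlinarith)
  have hs0 : 0 < Real.sinh (l₀ * x₀) := Real.sinh_pos_iff.mpr (mul_pos h0' h0)
  have sinh0 : Real.sinh (l₀ * x₀) ≤ ‖Complex.sinh ((l₀:ℂ)*z)‖ := by
    calc Real.sinh (l₀ * x₀) ≤ Real.sinh ((l₀:ℂ)*z).re := by
          rw [hre]; exact Real.sinh_le_sinh.mpr (by nlinarith)
      _ ≤ _ := sinh_le_abs_sinh _ (by rw [hre]; positivity)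
  have habs0 : 0 < ‖Complex.sinh ((l₀:ℂ)*z)‖ := lt_of_lt_of_le hs0 sinh0
  rw [norm_mul, norm_div, norm_one]
  have tri : ‖(ρ₁ : ℂ) * Complex.cosh ((l₁ : ℂ) * z) / Complex.sinh ((l₁ : ℂ) * z) -
         (ρ₂ : ℂ) * Complex.cosh ((l₂ : ℂ) * z) / Complex.sinh ((l₂ : ℂ) * z)‖ ≤
      ρ₁ * (Real.cosh (l₁ * x₀) / Real.sinh (l₁ * x₀)) +
      ρ₂ * (Real.cosh (l₂ * x₀) / Real.sinh (l₂ * x₀)) := by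
    refine le_trans (norm_sub_le _ _) ?_
    have e1 : ‖(ρ₁ : ℂ) * Complex.cosh ((l₁ : ℂ) * z) / Complex.sinh ((l₁ : ℂ) * z)‖ =
        ρ₁ * ‖Complex.cosh ((l₁:ℂ)*z) / Complex.sinh ((l₁:ℂ)*z)‖ := by
      rw [mul_div_assoc, norm_mul, Complex.norm_real, Real.norm_of_nonneg hρ₁]
    have e2 : ‖(ρ₂ : ℂ) * Complex.cosh ((l₂ : ℂ) * z) / Complex.sinh ((l₂ : ℂ) * z)‖ =
        ρ₂ * ‖Complex.cosh ((l₂:ℂ)*z) / Complex.sinh ((l₂:ℂ)*z)‖ := by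
      rw [mul_div_assoc, norm_mul, Complex.norm_real, Real.norm_of_nonneg hρ₂]
    rw [e1, e2]
    exact add_le_add (mul_le_mul_of_nonneg_left (coth_bd l₁ h1) hρ₁)
      (mul_le_mul_of_nonneg_left (coth_bd l₂ h2) hρ₂)
  have h1div : 1 / ‖Complex.sinh ((l₀:ℂ)*z)‖ ≤ 1 / Real.sinh (l₀ * x₀) :=
    one_div_le_one_div_of_le hs0 sinh0
  have hnn : 0 ≤ ‖(ρ₁ : ℂ) * Complex.cosh ((l₁ : ℂ) * z) / Complex.sinh ((l₁ : ℂ) * z) -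
         (ρ₂ : ℂ) * Complex.cosh ((l₂ : ℂ) * z) / Complex.sinh ((l₂ : ℂ) * z)‖ :=
    norm_nonneg _
  calc 1 / ‖Complex.sinh ((l₀:ℂ)*z)‖ * _ ≤ (1 / Real.sinh (l₀ * x₀)) * _ :=
        mul_le_mul h1div tri hnn (by positivity)
    _ = _ := rfl
end
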